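/- Let (Z_{ij} : i ≥ 1, 1 ≤ j ≤ r_i) be independent ℤ₊-valued random variables such that for each i the variables Z_{i1},…,Z_{i r_i} are i.i.d.; set Z_i := ∑_{j=1}^{r_i} Z_{ij}, θ_i := i·E[Z_i] ∈ (0,∞), and T_{a,n} := ∑_{i=a+1}^n i·Z_i. Let ε_{ik} := (i·r_i/θ_i)·P[Z_{i1}=k] − 1{k=1} for k ≥ 1, μ_i := ∑_{k≥1} k·sup_{j≥i} |ε_{jk}| (assumed finite), θ > 0, δ(m,θ) := sup_{j≥0} |θ − (1/m)∑_{i=1}^m θ_{jm+i}|, and θ* := max{1, θ, sup_i θ_i}. Then for all integers a, j, n, m with 0 ≤ a ≤ j < n, 0 < 2m ≤ j, and μ_{j+1} ≤ 1/2, one has P[T_{a,n} ≤ j] ≤ { 2·e^{1+θ*}·((j+1)/(n+1))^{θ − δ(m,θ)} }^{1−μ_{j+1}}. -/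

import Mathlib

open MeasureTheory ProbabilityTheory Finset
set_option maxHeartbeats 1000000

lemma aux_tel (b0 K : ℕ) :
    Real.log ((b0 + K + 1 : ℕ)) - Real.log ((b0 + 1 : ℕ)) ≤
      ∑ b ∈ range K, 1 / ((b0 + b + 1 : ℕ) : ℝ) := by
  set f : ℕ → ℝ := fun b => Real.log ((b0 + b + 1 : ℕ)) with hf
  have h : ∀ b : ℕ, f (b + 1) - f b ≤ 1 / ((b0 + b + 1 : ℕ) : ℝ) := by
    intro b
    have hpos : (0:ℝ) < ((b0 + b + 1 : ℕ) : ℝ) := by positivity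
    have hpos2 : (0:ℝ) < ((b0 + (b+1) + 1 : ℕ) : ℝ) := by positivity
    have h2 := Real.log_le_sub_one_of_pos (div_pos hpos2 hpos)
    rw [Real.log_div (ne_of_gt hpos2) (ne_of_gt hpos)] at h2
    have h3 : ((b0 + (b+1) + 1 : ℕ) : ℝ) / ((b0 + b + 1 : ℕ) : ℝ) - 1
        = 1 / ((b0 + b + 1 : ℕ) : ℝ) := by
      field_simp
      push_cast; ring
    rw [h3] at h2
    simpa [hf] using h2
  calc Real.log ((b0 + K + 1 : ℕ)) - Real.log ((b0 + 1 : ℕ))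
      = f K - f 0 := by simp [hf]
    _ = ∑ b ∈ range K, (f (b + 1) - f b) := (Finset.sum_range_sub f K).symm
    _ ≤ _ := Finset.sum_le_sum (fun b _ => h b)

lemma aux_blocks (f g : ℕ → ℝ) (m b0 : ℕ) :
    ∀ K, (∀ b, b < K → g (b0 + b) ≤ ∑ i ∈ Ioc ((b0 + b) * m) ((b0 + b + 1) * m), f i) →
    ∑ b ∈ range K, g (b0 + b) ≤ ∑ i ∈ Ioc (b0 * m) ((b0 + K) * m), f i := by
  intro K
  induction K with
  | zero => simp
  | succ K ih =>
    intro h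
    rw [Finset.sum_range_succ]
    have hsplit : Ioc (b0 * m) ((b0 + (K+1)) * m)
        = Ioc (b0 * m) ((b0 + K) * m) ∪ Ioc ((b0 + K) * m) ((b0 + K + 1) * m) := by
      rw [Finset.Ioc_union_Ioc_eq_Ioc (Nat.mul_le_mul_right m (by omega))
        (Nat.mul_le_mul_right m (by omega))]
      norm_num [Nat.add_assoc]
    rw [hsplit, Finset.sum_union (by
      rw [Finset.disjoint_left]
      intro x hx hx'
      simp only [Finset.mem_Ioc] at hx hx'
      omega)]
    exact add_le_add (ih (fun b hb => h b (by omega))) (h K (by omega))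

/-- Display (3.14): under the quasi-logarithmic setup, for `0 ≤ a ≤ j < n`, `0 < 2m ≤ j` and
`μ_{j+1} ≤ 1/2`,
`P[T_{a,n} ≤ j] ≤ {2 e^{1+θ*} ((j+1)/(n+1))^{θ−δ(m,θ)}}^{1−μ_{j+1}}`. -/
theorem stmt10 {Ω : Type*} [MeasurableSpace Ω] (P : Measure Ω) [IsProbabilityMeasure P]
    (r : ℕ → ℕ) (hr : ∀ i, 1 ≤ r i)
    (Z : ℕ → ℕ → Ω → ℕ) (hZm : ∀ i j, Measurable (Z i j))
    (hind : iIndepFun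
      (fun p : (i : ℕ) × Fin (r i) => Z p.1 p.2.1) P)
    (hiid : ∀ i, ∀ j < r i, Measure.map (Z i j) P = Measure.map (Z i 0) P)
    (hint : ∀ i j, Integrable (fun ω => (Z i j ω : ℝ)) P)
    (Zs : ℕ → Ω → ℕ) (hZs : ∀ i ω, Zs i ω = ∑ j ∈ range (r i), Z i j ω)
    (θi : ℕ → ℝ) (hθi : ∀ i, θi i = i * ∫ ω, (Zs i ω : ℝ) ∂P)
    (hθipos : ∀ i, 1 ≤ i → 0 < θi i)
    (hθibdd : BddAbove (Set.range fun i => θi (i + 1)))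
    (ε : ℕ → ℕ → ℝ)
    (hε : ∀ i k, ε i k =
      ((i : ℝ) * r i / θi i) * (P {ω | Z i 0 ω = k}).toReal - if k = 1 then 1 else 0)
    (hεbdd : ∀ i k, BddAbove (Set.range fun j => |ε (i + j) k|))
    (μ : ℕ → ℝ) (hμ : ∀ i, μ i = ∑' k : ℕ, (k : ℝ) * ⨆ j : ℕ, |ε (i + j) k|)
    (hμsum : ∀ i, Summable fun k : ℕ => (k : ℝ) * ⨆ j : ℕ, |ε (i + j) k|)
    (θ : ℝ) (hθ : 0 < θ)
    (a j n m : ℕ) (haj : a ≤ j) (hjn : j < n) (hm : 0 < m) (h2m : 2 * m ≤ j)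
    (hμj : μ (j + 1) ≤ 1 / 2) :
    (P {ω | ∑ i ∈ Icc (a + 1) n, i * Zs i ω ≤ j}).toReal ≤
      (2 * Real.exp (1 + max 1 (max θ (⨆ i, θi (i + 1)))) *
          (((j : ℝ) + 1) / ((n : ℝ) + 1)) ^
            (θ - ⨆ jb : ℕ, |θ - (1 / (m : ℝ)) * ∑ i ∈ Icc 1 m, θi (jb * m + i)|)) ^
        (1 - μ (j + 1)) := by
  classical
  set M := ⨆ i, θi (i + 1) with hM
  set δ := ⨆ jb : ℕ, |θ - (1 / (m : ℝ)) * ∑ i ∈ Icc 1 m, θi (jb * m + i)| with hδdef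
  set Θ := max 1 (max θ M) with hΘdef
  set c := 1 - μ (j + 1) with hcdef
  have hm' : (0:ℝ) < m := by exact_mod_cast hm
  have hμ0 : 0 ≤ μ (j + 1) := by
    rw [hμ]
    refine tsum_nonneg fun k => mul_nonneg (Nat.cast_nonneg k) ?_
    exact le_trans (abs_nonneg _) (le_ciSup (hεbdd _ k) 0)
  have hc2 : (1:ℝ)/2 ≤ c := by rw [hcdef]; linarith
  have hcpos : (0:ℝ) < c := by linarith
  have hΘ1 : (1:ℝ) ≤ Θ := le_max_left _ _
  have hθΘ : θ ≤ Θ := le_trans (le_max_left _ _) (le_max_right _ _)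
  have hθiM : ∀ i, 1 ≤ i → θi i ≤ M := by
    intro i hi
    have h := le_ciSup hθibdd (i - 1)
    rwa [Nat.sub_add_cancel hi] at h
  have havg_nonneg : ∀ b : ℕ, 0 ≤ (1 / (m:ℝ)) * ∑ i ∈ Icc 1 m, θi (b * m + i) := by
    intro b
    refine mul_nonneg (by positivity) (Finset.sum_nonneg fun i hi => ?_)
    have := Finset.mem_Icc.mp hi
    exact le_of_lt (hθipos _ (by omega))
  have havgM : ∀ b : ℕ, (1 / (m:ℝ)) * ∑ i ∈ Icc 1 m, θi (b * m + i) ≤ M := by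
    intro b
    have h1 : ∑ i ∈ Icc 1 m, θi (b * m + i) ≤ ∑ _i ∈ Icc 1 m, M :=
      Finset.sum_le_sum fun i hi => hθiM _ (by have := Finset.mem_Icc.mp hi; omega)
    rw [Finset.sum_const, Nat.card_Icc] at h1
    simp only [Nat.add_sub_cancel] at h1
    calc (1 / (m:ℝ)) * ∑ i ∈ Icc 1 m, θi (b * m + i) ≤ (1 / (m:ℝ)) * (m * M) := by
          apply mul_le_mul_of_nonneg_left _ (by positivity)
          simpa [nsmul_eq_mul] using h1
      _ = M := by field_simp
  have hδbdd : BddAbove (Set.range fun jb : ℕ =>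
      |θ - (1 / (m:ℝ)) * ∑ i ∈ Icc 1 m, θi (jb * m + i)|) := by
    refine ⟨θ + M, ?_⟩
    rintro x ⟨b, rfl⟩
    rw [abs_le]
    constructor
    · have := havgM b
      simp only [neg_le, neg_sub]
      linarith [havg_nonneg b, hθ.le]
    · linarith [havg_nonneg b, havgM b, hθ.le]
  have hδ0 : 0 ≤ δ := le_trans (abs_nonneg _) (le_ciSup hδbdd 0)
  have hδ_ge : ∀ b : ℕ, θ - δ ≤ (1 / (m:ℝ)) * ∑ i ∈ Icc 1 m, θi (b * m + i) := by
    intro b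
    have h1 := le_ciSup hδbdd b
    have h2 := le_abs_self (θ - (1 / (m:ℝ)) * ∑ i ∈ Icc 1 m, θi (b * m + i))
    rw [hδdef]
    linarith
  -- Step 1: per-index probability bound
  have hkey : ∀ i, j < i → ((P {ω | Z i 0 ω = 0}).toReal) ^ (r i)
      ≤ Real.exp (-(c * (θi i / i))) := by
    intro i hij
    have hi1 : 1 ≤ i := by omega
    have hipos : (0:ℝ) < i := by exact_mod_cast hi1
    have hrpos : (0:ℝ) < r i := by exact_mod_cast hr i
    have hθp := hθipos i hi1
    set A : ℝ := (i:ℝ) * r i with hA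
    have hApos : 0 < A := mul_pos hipos hrpos
    set q := (P {ω | Z i 0 ω = 1}).toReal with hq
    set p := (P {ω | Z i 0 ω = 0}).toReal with hp
    have hε1 : |ε i 1| ≤ μ (j + 1) := by
      have h1 : |ε i 1| ≤ ⨆ l, |ε ((j+1) + l) 1| := by
        have h := le_ciSup (hεbdd (j+1) 1) (i - (j+1))
        rwa [show (j+1) + (i - (j+1)) = i by omega] at h
      have h2 : ((1:ℕ):ℝ) * (⨆ l, |ε ((j+1) + l) 1|) ≤ μ (j+1) := by
        rw [hμ]
        exact Summable.le_tsum (hμsum (j+1)) 1 (fun k _ => mul_nonneg (Nat.cast_nonneg k)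
          (le_trans (abs_nonneg _) (le_ciSup (hεbdd _ k) 0)))
      rw [Nat.cast_one, one_mul] at h2
      linarith
    have h3 : c ≤ A / θi i * q := by
      have h := hε i 1
      rw [if_pos rfl] at h
      have h4 : -|ε i 1| ≤ ε i 1 := neg_abs_le _
      have h5 : A / θi i * q = ε i 1 + 1 := by rw [h, hq, hA]; ring
      rw [h5, hcdef]
      linarith
    have hq_ge : c * θi i / A ≤ q := by
      have h5 : θi i / A * (A / θi i * q) = q := by field_simp [hθp.ne', hApos.ne']
      calc c * θi i / A = θi i / A * c := by ring
        _ ≤ θi i / A * (A / θi i * q) :=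
            mul_le_mul_of_nonneg_left h3 (le_of_lt (div_pos hθp hApos))
        _ = q := h5
    have hpq : p + q ≤ 1 := by
      have hdisj : Disjoint {ω | Z i 0 ω = 0} {ω | Z i 0 ω = 1} := by
        rw [Set.disjoint_left]
        rintro ω h0 h1
        simp only [Set.mem_setOf_eq] at h0 h1
        omega
      have hm1 : MeasurableSet {ω | Z i 0 ω = 1} := hZm i 0 (measurableSet_singleton 1)
      have hun : P {ω | Z i 0 ω = 0} + P {ω | Z i 0 ω = 1} ≤ 1 := by
        rw [← measure_union hdisj hm1]
        exact prob_le_one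
      calc p + q = (P {ω | Z i 0 ω = 0} + P {ω | Z i 0 ω = 1}).toReal :=
            (ENNReal.toReal_add (measure_ne_top P _) (measure_ne_top P _)).symm
        _ ≤ (1 : ENNReal).toReal := ENNReal.toReal_mono ENNReal.one_ne_top hun
        _ = 1 := ENNReal.toReal_one
    have hp_exp : p ≤ Real.exp (-(c * θi i / A)) := by
      have h7 := Real.add_one_le_exp (-(c * θi i / A))
      linarith
    have hp0 : 0 ≤ p := ENNReal.toReal_nonneg
    calc p ^ (r i) ≤ (Real.exp (-(c * θi i / A))) ^ (r i) := pow_le_pow_left₀ hp0 hp_exp _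
      _ = Real.exp ((r i : ℕ) * (-(c * θi i / A))) := (Real.exp_nat_mul _ _).symm
      _ = Real.exp (-(c * (θi i / i))) := by
          congr 1
          rw [hA]
          field_simp
  -- Step 2: independence
  set T : Finset ((i : ℕ) × Fin (r i)) := (Ioc j n).sigma (fun _ => Finset.univ) with hT
  have hPE : P (⋂ p ∈ T, (fun pp : (i : ℕ) × Fin (r i) => Z pp.1 pp.2.1) p ⁻¹' {0})
      = ∏ p ∈ T, P ((fun pp : (i : ℕ) × Fin (r i) => Z pp.1 pp.2.1) p ⁻¹' {0}) :=
    hind.measure_inter_preimage_eq_mul T (sets := fun _ => ({0} : Set ℕ))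
      (fun _ _ => measurableSet_singleton 0)
  have hsub : {ω | ∑ i ∈ Icc (a + 1) n, i * Zs i ω ≤ j}
      ⊆ ⋂ p ∈ T, (fun pp : (i : ℕ) × Fin (r i) => Z pp.1 pp.2.1) p ⁻¹' {0} := by
    intro ω hω
    simp only [Set.mem_setOf_eq] at hω
    simp only [Set.mem_iInter]
    intro p hp
    have hpmem : p.1 ∈ Ioc j n := (Finset.mem_sigma.mp hp).1
    rw [Finset.mem_Ioc] at hpmem
    have hmem : p.1 ∈ Icc (a+1) n := Finset.mem_Icc.mpr ⟨by omega, hpmem.2⟩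
    have h1 : p.1 * Zs p.1 ω ≤ j :=
      le_trans (Finset.single_le_sum (f := fun i => i * Zs i ω)
        (fun i _ => Nat.zero_le _) hmem) hω
    have h2 : Zs p.1 ω = 0 := by
      by_contra h
      have h' : 1 ≤ Zs p.1 ω := Nat.pos_of_ne_zero h
      have := Nat.mul_le_mul_left p.1 h'
      omega
    have h3 : Z p.1 p.2.1 ω ≤ Zs p.1 ω := by
      rw [hZs]
      exact Finset.single_le_sum (f := fun k => Z p.1 k ω)
        (fun _ _ => Nat.zero_le _) (Finset.mem_range.mpr p.2.2)
    simp only [Set.mem_preimage, Set.mem_singleton_iff]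
    omega
  have hPE2 : (P (⋂ p ∈ T, (fun pp : (i : ℕ) × Fin (r i) => Z pp.1 pp.2.1) p ⁻¹' {0})).toReal
      = ∏ i ∈ Ioc j n, ((P {ω | Z i 0 ω = 0}).toReal) ^ (r i) := by
    rw [hPE, ENNReal.toReal_prod, hT, Finset.prod_sigma]
    refine Finset.prod_congr rfl fun i _ => ?_
    have heach : ∀ k : Fin (r i),
        (P (Z i k.1 ⁻¹' {0})).toReal = (P {ω | Z i 0 ω = 0}).toReal := by
      intro k
      have h := hiid i k.1 k.2
      have h2 := congrArg (fun ν : Measure ℕ => ν {0}) h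
      rw [Measure.map_apply (hZm i k.1) (measurableSet_singleton 0),
        Measure.map_apply (hZm i 0) (measurableSet_singleton 0)] at h2
      exact congrArg ENNReal.toReal h2
    calc ∏ k : Fin (r i), (P ((fun pp : (i : ℕ) × Fin (r i) => Z pp.1 pp.2.1) ⟨i, k⟩ ⁻¹' {0})).toReal
        = ∏ _k : Fin (r i), (P {ω | Z i 0 ω = 0}).toReal :=
          Finset.prod_congr rfl fun k _ => heach k
      _ = ((P {ω | Z i 0 ω = 0}).toReal) ^ (r i) := by
          rw [Finset.prod_const, Finset.card_univ, Fintype.card_fin]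
  set S := ∑ i ∈ Ioc j n, θi i / i with hS
  have hstep : (P {ω | ∑ i ∈ Icc (a + 1) n, i * Zs i ω ≤ j}).toReal
      ≤ Real.exp (-(c * S)) := by
    calc (P {ω | ∑ i ∈ Icc (a + 1) n, i * Zs i ω ≤ j}).toReal
        ≤ (P (⋂ p ∈ T, (fun pp : (i : ℕ) × Fin (r i) => Z pp.1 pp.2.1) p ⁻¹' {0})).toReal :=
          ENNReal.toReal_mono (measure_ne_top P _) (measure_mono hsub)
      _ = ∏ i ∈ Ioc j n, ((P {ω | Z i 0 ω = 0}).toReal) ^ (r i) := hPE2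
      _ ≤ ∏ i ∈ Ioc j n, Real.exp (-(c * (θi i / i))) :=
          Finset.prod_le_prod (fun i _ => pow_nonneg ENNReal.toReal_nonneg _)
            (fun i hi => hkey i (Finset.mem_Ioc.mp hi).1)
      _ = Real.exp (∑ i ∈ Ioc j n, -(c * (θi i / i))) := (Real.exp_sum _ _).symm
      _ = Real.exp (-(c * S)) := by
          rw [hS, Finset.mul_sum]
          rw [← Finset.sum_neg_distrib]
  -- Step 3: analytic bound
  have hn1 : (0:ℝ) < (n:ℝ) + 1 := by positivity
  have hj1 : (0:ℝ) < (j:ℝ) + 1 := by positivity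
  set L : ℝ := Real.log ((n:ℝ)+1) - Real.log ((j:ℝ)+1) with hL
  have hL0 : 0 ≤ L := by
    rw [hL]
    have h1 : ((j:ℝ)+1) ≤ (n:ℝ)+1 := by
      have : (j:ℝ) ≤ (n:ℝ) := by exact_mod_cast hjn.le
      linarith
    linarith [Real.log_le_log hj1 h1]
  have hlog2 : 0 ≤ Real.log 2 := Real.log_nonneg one_le_two
  have hlog2' : Real.log 2 ≤ 1 := by
    have := Real.log_le_sub_one_of_pos (by norm_num : (0:ℝ) < 2)
    linarith
  have hS0 : 0 ≤ S := by
    rw [hS]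
    refine Finset.sum_nonneg fun i hi => ?_
    have hi' := Finset.mem_Ioc.mp hi
    exact div_nonneg (le_of_lt (hθipos i (by omega))) (Nat.cast_nonneg i)
  have hmain : (θ - δ) * L - (1 + Θ + Real.log 2) ≤ S := by
    rcases le_or_gt (θ - δ) 0 with hcase | hcase
    · nlinarith [mul_nonpos_of_nonpos_of_nonneg hcase hL0]
    · set b0 := (j + m - 1) / m with hb0
      set q0 := n / m with hq0
      set K := q0 - b0 with hK
      have hd1 : b0 * m ≤ j + m - 1 := Nat.div_mul_le_self _ _
      have hd2 : j + m - 1 < (b0 + 1) * m := (Nat.div_lt_iff_lt_mul hm).mp (Nat.lt_succ_self _)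
      have hd3 : q0 * m ≤ n := Nat.div_mul_le_self _ _
      have hd4 : n < (q0 + 1) * m := (Nat.div_lt_iff_lt_mul hm).mp (Nat.lt_succ_self _)
      rw [add_mul, one_mul] at hd2 hd4
      have F1 : j ≤ b0 * m := by omega
      have hq1 : 1 ≤ q0 := (Nat.one_le_div_iff hm).mpr (by omega)
      have hblock : ∀ b : ℕ, (θ - δ) * (1 / ((b:ℝ) + 1))
          ≤ ∑ i ∈ Ioc (b * m) ((b + 1) * m), θi i / i := by
        intro b
        have hbm : (0:ℝ) < ((b:ℝ) + 1) * m := by positivity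
        have hsum_eq : ∑ i ∈ Icc 1 m, θi (b * m + i)
            = ∑ i ∈ Ioc (b * m) ((b + 1) * m), θi i := by
          rw [show (∑ i ∈ Icc 1 m, θi (b * m + i))
              = ∑ i ∈ (Icc 1 m).image (fun x => b * m + x), θi i from
            (Finset.sum_image (fun x _ y _ h => by omega)).symm]
          rw [Finset.image_add_left_Icc, show b * m + m = (b + 1) * m by ring,
            Finset.Icc_add_one_left_eq_Ioc]
        have h2 : (m:ℝ) * (θ - δ) ≤ ∑ i ∈ Ioc (b * m) ((b + 1) * m), θi i := by
          have h := mul_le_mul_of_nonneg_left (hδ_ge b) (le_of_lt hm')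
          have he : (m:ℝ) * ((1/(m:ℝ)) * ∑ i ∈ Icc 1 m, θi (b * m + i))
              = ∑ i ∈ Icc 1 m, θi (b * m + i) := by field_simp
          rw [he, hsum_eq] at h
          exact h
        have h3 : ∀ i ∈ Ioc (b * m) ((b + 1) * m), θi i / (((b:ℝ) + 1) * m) ≤ θi i / i := by
          intro i hi
          have hi' := Finset.mem_Ioc.mp hi
          have hipos : (0:ℝ) < i := by exact_mod_cast (by omega : 0 < i)
          have hile : (i:ℝ) ≤ ((b:ℝ) + 1) * m := by
            have : (i:ℝ) ≤ (((b + 1) * m : ℕ) : ℝ) := by exact_mod_cast hi'.2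
            push_cast at this
            linarith
          have hnum : 0 ≤ θi i := le_of_lt (hθipos i (by omega))
          gcongr
        calc (θ - δ) * (1 / ((b:ℝ) + 1)) = ((m:ℝ) * (θ - δ)) / (((b:ℝ) + 1) * m) := by
              field_simp
          _ ≤ (∑ i ∈ Ioc (b * m) ((b + 1) * m), θi i) / (((b:ℝ) + 1) * m) := by gcongr
          _ = ∑ i ∈ Ioc (b * m) ((b + 1) * m), θi i / (((b:ℝ) + 1) * m) := Finset.sum_div _ _ _
          _ ≤ ∑ i ∈ Ioc (b * m) ((b + 1) * m), θi i / i := Finset.sum_le_sum h3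
      have hBlo : ∑ b ∈ range K, (θ - δ) * (1 / (((b0 + b : ℕ) : ℝ) + 1))
          ≤ ∑ i ∈ Ioc (b0 * m) ((b0 + K) * m), θi i / i :=
        aux_blocks (fun i => θi i / i) (fun b => (θ - δ) * (1 / ((b:ℝ) + 1))) m b0 K
          (fun b _ => hblock (b0 + b))
      have hsubS : ∑ i ∈ Ioc (b0 * m) ((b0 + K) * m), θi i / i ≤ S := by
        rw [hS]
        apply Finset.sum_le_sum_of_subset_of_nonneg
        · intro i hi
          rw [Finset.mem_Ioc] at hi ⊢
          refine ⟨by omega, ?_⟩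
          rcases le_or_gt b0 q0 with hbq | hbq
          · have hbk : b0 + K = q0 := by omega
            rw [hbk] at hi
            omega
          · have hK0 : K = 0 := by omega
            rw [hK0] at hi
            simp only [Nat.add_zero] at hi
            omega
        · intro i hi _
          have hi' := (Finset.mem_Ioc.mp hi).1
          exact div_nonneg (le_of_lt (hθipos i (by omega))) (Nat.cast_nonneg i)
      have htel : (θ - δ) * (Real.log ((b0 + K + 1 : ℕ)) - Real.log ((b0 + 1 : ℕ)))
          ≤ ∑ b ∈ range K, (θ - δ) * (1 / (((b0 + b : ℕ) : ℝ) + 1)) := by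
        rw [← Finset.mul_sum]
        apply mul_le_mul_of_nonneg_left _ hcase.le
        refine le_trans (aux_tel b0 K) (le_of_eq (Finset.sum_congr rfl fun b _ => ?_))
        push_cast
        ring
      have hlogcmp : L - Real.log 2
          ≤ Real.log ((b0 + K + 1 : ℕ)) - Real.log ((b0 + 1 : ℕ)) := by
        rcases le_or_gt b0 q0 with hbq | hbq
        · have hbk : b0 + K = q0 := by omega
          have h1 : ((n:ℝ) + 1) / m ≤ ((q0 + 1 : ℕ) : ℝ) := by
            rw [div_le_iff₀ hm']
            have h1' : (n:ℝ) + 1 ≤ ((q0 * m + m : ℕ) : ℝ) := by exact_mod_cast (by omega : n + 1 ≤ q0 * m + m)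
            push_cast at h1' ⊢
            nlinarith
          have h2 : ((b0 + 1 : ℕ) : ℝ) ≤ 2 * ((j:ℝ) + 1) / m := by
            rw [le_div_iff₀ hm']
            have h2' : ((b0 * m + m : ℕ) : ℝ) ≤ 2 * (j:ℝ) + 2 := by
              exact_mod_cast (by omega : b0 * m + m ≤ 2 * j + 2)
            push_cast at h2' ⊢
            nlinarith
          have h3 := Real.log_le_log (by positivity) h1
          have h4 := Real.log_le_log (by positivity : (0:ℝ) < ((b0 + 1 : ℕ) : ℝ)) h2
          rw [Real.log_div (by positivity) (ne_of_gt hm')] at h3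
          have h5 : Real.log (2 * ((j:ℝ) + 1) / m)
              = Real.log 2 + Real.log ((j:ℝ) + 1) - Real.log m := by
            rw [Real.log_div (by positivity) (ne_of_gt hm'),
              Real.log_mul (by norm_num) (ne_of_gt hj1)]
          rw [h5] at h4
          rw [hL, hbk]
          linarith
        · have hK0 : K = 0 := by omega
          have hmul : (q0 + 1) * m ≤ b0 * m := Nat.mul_le_mul_right m (by omega)
          rw [add_mul, one_mul] at hmul
          have hn2 : (n:ℝ) + 1 ≤ 2 * ((j:ℝ) + 1) := by
            have : n + 1 ≤ 2 * (j + 1) := by omega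
            exact_mod_cast this
          have h6 : Real.log ((n:ℝ) + 1) ≤ Real.log 2 + Real.log ((j:ℝ) + 1) := by
            rw [← Real.log_mul (by norm_num) (ne_of_gt hj1)]
            exact Real.log_le_log hn1 hn2
          rw [hK0, hL]
          simp only [Nat.add_zero]
          linarith
      have hlog2Θ : (θ - δ) * Real.log 2 ≤ 1 + Θ + Real.log 2 := by
        have h7 : (θ - δ) * Real.log 2 ≤ (θ - δ) * 1 :=
          mul_le_mul_of_nonneg_left hlog2' hcase.le
        linarith
      calc (θ - δ) * L - (1 + Θ + Real.log 2)
          ≤ (θ - δ) * L - (θ - δ) * Real.log 2 := by linarith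
        _ = (θ - δ) * (L - Real.log 2) := by ring
        _ ≤ (θ - δ) * (Real.log ((b0 + K + 1 : ℕ)) - Real.log ((b0 + 1 : ℕ))) :=
            mul_le_mul_of_nonneg_left hlogcmp hcase.le
        _ ≤ ∑ b ∈ range K, (θ - δ) * (1 / (((b0 + b : ℕ) : ℝ) + 1)) := htel
        _ ≤ ∑ i ∈ Ioc (b0 * m) ((b0 + K) * m), θi i / i := hBlo
        _ ≤ S := hsubS
  -- Conclusion
  set x : ℝ := ((j:ℝ)+1) / ((n:ℝ)+1) with hx
  have hxpos : 0 < x := div_pos hj1 hn1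
  have hB : (0:ℝ) < 2 * Real.exp (1 + Θ) * x ^ (θ - δ) := by
    positivity
  have hlogB : Real.log (2 * Real.exp (1 + Θ) * x ^ (θ - δ))
      = Real.log 2 + (1 + Θ) + (θ - δ) * (-L) := by
    rw [Real.log_mul (by positivity) (ne_of_gt (Real.rpow_pos_of_pos hxpos _)),
      Real.log_mul (by norm_num) (Real.exp_ne_zero _), Real.log_exp,
      Real.log_rpow hxpos, hx, Real.log_div (ne_of_gt hj1) (ne_of_gt hn1), hL]
    ring
  have hfinal : Real.exp (-(c * S)) ≤ (2 * Real.exp (1 + Θ) * x ^ (θ - δ)) ^ c := by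
    rw [Real.rpow_def_of_pos hB, hlogB]
    apply Real.exp_le_exp.mpr
    have h8 : -S ≤ Real.log 2 + (1 + Θ) + (θ - δ) * (-L) := by nlinarith [hmain]
    nlinarith [h8, hcpos]
  exact le_trans hstep hfinal
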